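/- arXiv:1808.08882 — 2 statements merged into one kernel-verified Lean document; each statement's English description precedes it below -/
import Mathlib

section
/- Let E be a closed set in ℝⁿ and let D be a continuous nonnegative function on ℝⁿ which vanishes on E, is of class C¹ on Ω = ℝⁿ ∖ E, and is such that |∇D| is positive and constant on every connected component of Ω. Then E is convex. If, in addition, |∇D| = 1 on all of Ω, then D(x) = dist(x,E) for every x ∈ ℝⁿ. -/
open Metric MeasureTheory Set Filter
open scoped ENNReal Topology NNReal

noncomputable section

abbrev Euc (n : ℕ) := EuclideanSpace ℝ (Fin n)

local notation "⟪" x ", " y "⟫" => @inner ℝ _ _ x y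

/-- Ekeland's variational principle (weak form with explicit lower bound). -/
theorem my_ekeland {X : Type*} [MetricSpace X] [CompleteSpace X] (f : X → ℝ)
    (hf : Continuous f) (B : ℝ) (hB : ∀ z, B ≤ f z) (x₀ : X) (lam : ℝ) (hlam : 0 < lam) :
    ∃ y, f y ≤ f x₀ ∧ dist y x₀ ≤ (f x₀ - B) / lam ∧ ∀ z, f y - lam * dist z y ≤ f z := by
  have hbdd : ∀ w : X, BddBelow (f '' {z | f z ≤ f w - lam * dist z w}) := by
    intro w
    exact ⟨B, by rintro r ⟨z, _, rfl⟩; exact hB z⟩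
  have hex : ∀ (k : ℕ) (w : X), ∃ z, (f z ≤ f w - lam * dist z w) ∧
      f z < sInf (f '' {z | f z ≤ f w - lam * dist z w}) + (1/2) ^ k := by
    intro k w
    have hne : (f '' {z | f z ≤ f w - lam * dist z w}).Nonempty :=
      ⟨f w, w, by simp, rfl⟩
    obtain ⟨r, ⟨z, hz, rfl⟩, hr⟩ := Real.lt_sInf_add_pos hne (by positivity : (0:ℝ) < (1/2)^k)
    exact ⟨z, hz, hr⟩
  choose g hg1 hg2 using hex
  set y : ℕ → X := fun k => Nat.rec x₀ g k with hy
  have hy0 : y 0 = x₀ := rfl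
  have hys : ∀ k, y (k+1) = g k (y k) := fun k => rfl
  set a : ℕ → ℝ := fun k => f (y k) with ha
  have hstep : ∀ k, a (k+1) ≤ a k - lam * dist (y (k+1)) (y k) := by
    intro k; rw [hys k]; exact hg1 k (y k)
  have hmono : ∀ k, a (k+1) ≤ a k := by
    intro k
    have := hstep k
    nlinarith [dist_nonneg (x := y (k+1)) (y := y k)]
  have hanti : Antitone a := antitone_nat_of_succ_le hmono
  have htel : ∀ k j, lam * dist (y (k+j)) (y k) ≤ a k - a (k+j) := by
    intro k j
    induction j with
    | zero => simp
    | succ j ih =>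
      have h1 := hstep (k+j)
      have h2 : dist (y (k+j+1)) (y k) ≤ dist (y (k+j+1)) (y (k+j)) + dist (y (k+j)) (y k) :=
        dist_triangle _ _ _
      have hkj : (k + (j+1)) = (k + j) + 1 := by omega
      rw [hkj]
      nlinarith [dist_nonneg (x := y (k+j+1)) (y := y (k+j))]
  have htel' : ∀ k m, k ≤ m → lam * dist (y m) (y k) ≤ a k - a m := by
    intro k m hkm
    obtain ⟨j, rfl⟩ := Nat.exists_eq_add_of_le hkm
    exact htel k j
  have hbddb : BddBelow (Set.range a) := ⟨B, by rintro r ⟨k, rfl⟩; exact hB _⟩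
  set α := ⨅ k, a k with hα
  have haconv : Tendsto a atTop (𝓝 α) := tendsto_atTop_ciInf hanti hbddb
  have hαle : ∀ k, α ≤ a k := fun k => ciInf_le hbddb k
  have key : ∀ k m, k ≤ m → dist (y m) (y k) ≤ (a k - α) / lam := by
    intro k m h
    rw [le_div_iff₀ hlam]
    have h1 := htel' k m h
    have h2 := hαle m
    nlinarith
  have hcauchy : CauchySeq y := by
    apply cauchySeq_of_le_tendsto_0 (fun N => (a N - α) / lam)
    · intro m n N hm hn
      rcases le_total m n with h | h
      · rw [dist_comm]
        calc dist (y n) (y m) ≤ (a m - α) / lam := key m n h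
          _ ≤ (a N - α) / lam := by
            have : a m ≤ a N := hanti hm
            gcongr
      · calc dist (y m) (y n) ≤ (a n - α) / lam := key n m h
          _ ≤ (a N - α) / lam := by
            have : a n ≤ a N := hanti hn
            gcongr
    · have h1 : Tendsto (fun N => a N - α) atTop (𝓝 (α - α)) :=
        haconv.sub tendsto_const_nhds
      rw [sub_self] at h1
      simpa using h1.div_const lam
  obtain ⟨yy, hyy⟩ := cauchySeq_tendsto_of_complete hcauchy
  have hfyy : f yy = α := by
    have h1 : Tendsto (fun k => f (y k)) atTop (𝓝 (f yy)) := (hf.tendsto yy).comp hyy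
    exact tendsto_nhds_unique h1 haconv
  have hdyy : ∀ k, dist yy (y k) ≤ (a k - α) / lam := by
    intro k
    have h1 : Tendsto (fun m => dist (y m) (y k)) atTop (𝓝 (dist yy (y k))) :=
      hyy.dist tendsto_const_nhds
    apply le_of_tendsto h1
    filter_upwards [eventually_ge_atTop k] with m hm using key k m hm
  refine ⟨yy, ?_, ?_, ?_⟩
  · rw [hfyy, ← hy0]; exact hαle 0
  · have h1 := hdyy 0
    rw [hy0] at h1
    refine h1.trans ?_
    have hBα : B ≤ α := by rw [← hfyy]; exact hB yy
    have h2 : a 0 = f x₀ := by show f (y 0) = f x₀; rw [hy0]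
    rw [h2] at h1 ⊢
    gcongr
  · intro z
    by_contra hz
    push_neg at hz
    rw [hfyy] at hz
    have hzk : ∀ k, f z ≤ a k - lam * dist z (y k) := by
      intro k
      have h1 : lam * dist yy (y k) ≤ a k - α := by
        have := hdyy k
        rw [le_div_iff₀ hlam] at this
        linarith
      have h2 : dist z (y k) ≤ dist z yy + dist yy (y k) := dist_triangle _ _ _
      nlinarith [dist_nonneg (x := z) (y := yy)]
    have hsk : ∀ k, a (k+1) ≤ f z + (1/2)^k := by
      intro k
      have hmem : f z ∈ f '' {w | f w ≤ f (y k) - lam * dist w (y k)} :=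
        ⟨z, hzk k, rfl⟩
      have h1 : sInf (f '' {w | f w ≤ f (y k) - lam * dist w (y k)}) ≤ f z :=
        csInf_le (hbdd (y k)) hmem
      have h2 := hg2 k (y k)
      rw [← hys k] at h2
      exact le_of_lt (lt_of_lt_of_le h2 (by linarith))
    have hlim : α ≤ f z := by
      have h1 : Tendsto (fun k => a (k+1)) atTop (𝓝 α) := haconv.comp (tendsto_add_atTop_nat 1)
      have h2 : Tendsto (fun k : ℕ => f z + (1/2:ℝ)^k) atTop (𝓝 (f z + 0)) :=
        tendsto_const_nhds.add (tendsto_pow_atTop_nhds_zero_of_lt_one (by norm_num) (by norm_num))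
      rw [add_zero] at h2
      exact le_of_tendsto_of_tendsto' h1 h2 hsk
    nlinarith [dist_nonneg (x := z) (y := yy)]

variable {F : Type*} [NormedAddCommGroup F] [InnerProductSpace ℝ F]



/-- One-sided slope lower bound for a Fréchet-differentiable function. -/
theorem fderiv_ge_of_slope {f : F → ℝ} {L : F →L[ℝ] ℝ} {x v : F} {c : ℝ}
    (hf : HasFDerivAt f L x) (h : ∀ t : ℝ, 0 < t → c * t ≤ f (x + t • v) - f x) :
    c ≤ L v := by
  have hcurve : HasDerivAt (fun t : ℝ => x + t • v) v 0 := by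
    simpa using ((hasDerivAt_id (0:ℝ)).smul_const v).const_add x
  have hcomp : HasDerivAt (fun t : ℝ => f (x + t • v)) (L v) 0 := by
    have : HasFDerivAt f L ((fun t : ℝ => x + t • v) 0) := by simpa using hf
    exact this.comp_hasDerivAt 0 hcurve
  have hwithin : HasDerivWithinAt (fun t : ℝ => f (x + t • v)) (L v) (Set.Ioi 0) 0 :=
    hcomp.hasDerivWithinAt
  rw [hasDerivWithinAt_iff_tendsto_slope] at hwithin
  have hsub : Set.Ioi (0:ℝ) \ {0} = Set.Ioi 0 := by
    ext t; simp (config := {contextual := true}) [ne_of_gt]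
  rw [hsub] at hwithin
  refine ge_of_tendsto hwithin ?_
  filter_upwards [self_mem_nhdsWithin] with t (ht : 0 < t)
  have h2 := h t ht
  have h0 : f (x + (0:ℝ) • v) = f x := by simp
  rw [slope_def_field, h0, le_div_iff₀ (by simpa using ht)]
  simpa [mul_comm] using h2

/-- If `f z ≥ f x - lam * dist z x` for all `z` and `f` has derivative `L` at `x`,
then `‖L‖ ≤ lam`. -/
theorem opNorm_le_of_ekeland {f : F → ℝ} {L : F →L[ℝ] ℝ} {x : F} {lam : ℝ}
    (hlam : 0 ≤ lam) (hf : HasFDerivAt f L x) (h : ∀ z, f x - lam * dist z x ≤ f z) :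
    ‖L‖ ≤ lam := by
  refine L.opNorm_le_bound hlam (fun v => ?_)
  have key : ∀ w : F, -(lam * ‖w‖) ≤ L w := by
    intro w
    refine fderiv_ge_of_slope hf (fun t ht => ?_)
    have h2 := h (x + t • w)
    have h3 : dist (x + t • w) x = t * ‖w‖ := by
      rw [dist_eq_norm]
      simp [norm_smul, abs_of_pos ht]
    rw [h3] at h2
    nlinarith
  have k1 := key v
  have k2 := key (-v)
  rw [map_neg, norm_neg] at k2
  rw [Real.norm_eq_abs, abs_le]
  constructor <;> linarith

/-- A subgradient at a point of differentiability equals the derivative. -/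
theorem fderiv_eq_innerSL_of_subgradient {f : F → ℝ} {L : F →L[ℝ] ℝ} {x e : F}
    (hf : HasFDerivAt f L x) (h : ∀ y, f x + ⟪e, y - x⟫ ≤ f y) :
    L = innerSL ℝ e := by
  ext v
  have key : ∀ w : F, ⟪e, w⟫ ≤ L w := by
    intro w
    refine fderiv_ge_of_slope hf (fun t ht => ?_)
    have h2 := h (x + t • w)
    have h3 : (x + t • w) - x = t • w := by abel
    rw [h3, real_inner_smul_right] at h2
    nlinarith [h2]
  have k1 := key v
  have k2 := key (-v)
  rw [map_neg, inner_neg_right] at k2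
  have : (L : F →L[ℝ] ℝ) v = ⟪e, v⟫ := by linarith
  simpa [innerSL_apply_apply] using this


section Core

variable {n : ℕ} {E : Set (Euc n)} (hE : IsClosed E) (D : Euc n → ℝ)
  (hcont : Continuous D) (hnonneg : ∀ x, 0 ≤ D x)
  (hzero : ∀ x ∈ E, D x = 0) (hC1 : ContDiffOn ℝ 1 D Eᶜ)
  (hpos : ∀ x ∈ Eᶜ, 0 < ‖gradient D x‖)
  (hconst : ∀ x ∈ Eᶜ, ∀ y ∈ connectedComponentIn Eᶜ x, ‖gradient D y‖ = ‖gradient D x‖)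

theorem norm_gradient_eq (y : Euc n) : ‖gradient D y‖ = ‖fderiv ℝ D y‖ := by
  rw [gradient]
  exact LinearIsometryEquiv.norm_map _ _

include hE hcont hnonneg hC1 hconst in
theorem ball_lower_bound {x : Euc n} (hx : x ∈ Eᶜ) {R : ℝ} (hR : 0 < R)
    (hball : ball x R ⊆ Eᶜ) : ‖gradient D x‖ * R ≤ D x := by
  by_contra hcon
  push_neg at hcon
  set c := ‖gradient D x‖ with hc
  have hcpos : 0 < c := by
    rcases (norm_nonneg (gradient D x)).lt_or_eq with h | h
    · exact h
    · exfalso; nlinarith [hnonneg x]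
  have hdr : D x / R < c := by rwa [div_lt_iff₀ hR]
  have hdr0 : 0 ≤ D x / R := div_nonneg (hnonneg x) hR.le
  obtain ⟨lam, hlam1, hlam2⟩ := exists_between hdr
  have hlam0 : 0 < lam := lt_of_le_of_lt hdr0 hlam1
  obtain ⟨y, hy1, hy2, hy3⟩ := my_ekeland D hcont 0 hnonneg x lam hlam0
  have hyball : y ∈ ball x R := by
    rw [mem_ball]
    calc dist y x ≤ (D x - 0) / lam := hy2
      _ = D x / lam := by ring_nf
      _ < R := by
          rw [div_lt_iff₀ hlam0]
          rw [div_lt_iff₀ hR] at hlam1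
          linarith
  have hyE : y ∈ Eᶜ := hball hyball
  have hyconn : y ∈ connectedComponentIn Eᶜ x :=
    (convex_ball x R).isPreconnected.subset_connectedComponentIn (mem_ball_self hR) hball hyball
  have hgy : ‖gradient D y‖ = c := hconst x hx y hyconn
  have hdiff : DifferentiableAt ℝ D y :=
    (hC1.contDiffAt ((hE.isOpen_compl).mem_nhds hyE)).differentiableAt one_ne_zero
  have hbound : ‖fderiv ℝ D y‖ ≤ lam :=
    opNorm_le_of_ekeland hlam0.le hdiff.hasFDerivAt hy3
  rw [← norm_gradient_eq, hgy] at hbound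
  linarith

include hE hcont hnonneg hC1 hpos hconst in
theorem E_nonempty : E.Nonempty := by
  by_contra hcon
  rw [Set.not_nonempty_iff_eq_empty] at hcon
  subst hcon
  have hx : (0 : Euc n) ∈ (∅ : Set (Euc n))ᶜ := by simp
  have hcpos := hpos 0 hx
  set c := ‖gradient D 0‖
  have hR : (0:ℝ) < (D 0 + 1) / c := div_pos (by linarith [hnonneg 0]) hcpos
  have := ball_lower_bound hE D hcont hnonneg hC1 hconst hx hR (by simp)
  rw [mul_div_cancel₀ _ (ne_of_gt hcpos)] at this
  linarith

include hE hcont hnonneg hC1 hconst in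
theorem lower_bound (hne : E.Nonempty) {x : Euc n} (hx : x ∈ Eᶜ) :
    ‖gradient D x‖ * infDist x E ≤ D x := by
  have hpos' : 0 < infDist x E := by
    rcases (infDist_nonneg (s := E) (x := x)).lt_or_eq with h | h
    · exact h
    · exfalso
      have : x ∈ closure E := (mem_closure_iff_infDist_zero hne).2 h.symm
      rw [hE.closure_eq] at this
      exact hx this
  refine ball_lower_bound hE D hcont hnonneg hC1 hconst hx hpos' (fun y hy => ?_)
  intro hyE
  have := infDist_le_dist_of_mem (x := x) hyE
  rw [mem_ball, dist_comm] at hy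
  linarith

include hE hcont hzero hC1 hconst in
theorem upper_bound (hne : E.Nonempty) {x : Euc n} (hx : x ∈ Eᶜ) :
    D x ≤ ‖gradient D x‖ * infDist x E := by
  obtain ⟨p, hpE, hpd⟩ := hE.exists_infDist_eq_dist hne x
  set c := ‖gradient D x‖ with hc
  set R := dist x p with hR
  have hRpos : 0 < R := by
    rw [hR, dist_pos]
    rintro rfl
    exact hx hpE
  set γ : ℝ → Euc n := fun t => x + t • (p - x) with hγ
  have hγcont : Continuous γ := by
    apply continuous_const.add
    exact continuous_id.smul continuous_const
  have hγ0 : γ 0 = x := by simp [hγ]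
  have hγ1 : γ 1 = p := by simp [hγ]
  have hpx : ‖p - x‖ = R := by rw [hR, dist_eq_norm]; exact norm_sub_rev p x
  have hγd : ∀ t : ℝ, dist x (γ t) = |t| * R := by
    intro t
    rw [dist_eq_norm, hγ]
    have h4 : x - (x + t • (p - x)) = (-t) • (p - x) := by
      rw [neg_smul]; abel
    rw [h4, norm_smul, norm_neg, Real.norm_eq_abs, hpx]
  have hseg : ∀ t ∈ Ico (0:ℝ) 1, γ t ∈ Eᶜ := by
    rintro t ⟨ht0, ht1⟩ htE
    have h1 : infDist x E ≤ dist x (γ t) := infDist_le_dist_of_mem htE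
    rw [hγd t, abs_of_nonneg ht0] at h1
    rw [hpd] at h1
    nlinarith
  have hconn : ∀ t ∈ Ico (0:ℝ) 1, γ t ∈ connectedComponentIn Eᶜ x := by
    rintro t ⟨ht0, ht1⟩
    have hpre : IsPreconnected (γ '' Icc 0 t) :=
      (isPreconnected_Icc).image γ (hγcont.continuousOn)
    have hsub : γ '' Icc 0 t ⊆ Eᶜ := by
      rintro z ⟨s, ⟨hs0, hst⟩, rfl⟩
      exact hseg s ⟨hs0, lt_of_le_of_lt hst ht1⟩
    have hxmem : x ∈ γ '' Icc 0 t := ⟨0, ⟨le_refl 0, ht0⟩, hγ0⟩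
    exact hpre.subset_connectedComponentIn hxmem hsub ⟨t, ⟨ht0, le_refl t⟩, rfl⟩
  have hderiv : ∀ t ∈ Ico (0:ℝ) 1,
      HasDerivWithinAt (fun s => D (γ s)) ((fderiv ℝ D (γ t)) (p - x)) (Ico 0 1) t := by
    intro t ht
    have hdiff : DifferentiableAt ℝ D (γ t) :=
      (hC1.contDiffAt ((hE.isOpen_compl).mem_nhds (hseg t ht))).differentiableAt one_ne_zero
    have hcurve : HasDerivAt γ (p - x) t := by
      have h := ((hasDerivAt_id t).smul_const (p - x)).const_add x
      rw [one_smul] at h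
      exact h
    exact (hdiff.hasFDerivAt.comp_hasDerivAt t hcurve).hasDerivWithinAt
  have hbound : ∀ t ∈ Ico (0:ℝ) 1, ‖(fderiv ℝ D (γ t)) (p - x)‖ ≤ c * R := by
    intro t ht
    calc ‖(fderiv ℝ D (γ t)) (p - x)‖ ≤ ‖fderiv ℝ D (γ t)‖ * ‖p - x‖ :=
          (fderiv ℝ D (γ t)).le_opNorm _
      _ = c * R := by
          rw [← norm_gradient_eq, hconst x hx (γ t) (hconn t ht), ← hc, hpx]
  have hmvt : ∀ t ∈ Ico (0:ℝ) 1, D x - c * R * t ≤ D (γ t) := by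
    intro t ht
    have h0 : (0:ℝ) ∈ Ico (0:ℝ) 1 := ⟨le_refl 0, one_pos⟩
    have := (convex_Ico (0:ℝ) 1).norm_image_sub_le_of_norm_hasDerivWithin_le
      hderiv hbound h0 ht
    rw [hγ0] at this
    have h2 : |D (γ t) - D x| ≤ c * R * t := by
      rw [← Real.norm_eq_abs]
      calc ‖D (γ t) - D x‖ ≤ c * R * ‖t - 0‖ := this
        _ = c * R * t := by rw [sub_zero, Real.norm_eq_abs, abs_of_nonneg ht.1]
    rw [abs_le] at h2
    linarith [h2.1]
  have hlim1 : Tendsto (fun t => D (γ t)) (𝓝[<] (1:ℝ)) (𝓝 0) := by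
    have h1 : Tendsto (fun t => D (γ t)) (𝓝 (1:ℝ)) (𝓝 (D (γ 1))) :=
      ((hcont.comp hγcont).tendsto 1)
    rw [hγ1, hzero p hpE] at h1
    exact h1.mono_left nhdsWithin_le_nhds
  have hlim2 : Tendsto (fun t : ℝ => D x - c * R * t) (𝓝[<] (1:ℝ)) (𝓝 (D x - c * R)) := by
    have : Tendsto (fun t : ℝ => D x - c * R * t) (𝓝 (1:ℝ)) (𝓝 (D x - c * R * 1)) := by
      exact (tendsto_const_nhds.sub (tendsto_const_nhds.mul tendsto_id))
    rw [mul_one] at this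
    exact this.mono_left nhdsWithin_le_nhds
  have hfin : D x - c * R ≤ 0 := by
    refine le_of_tendsto_of_tendsto hlim2 hlim1 ?_
    have hmem : Ico (0:ℝ) 1 ∈ 𝓝[<] (1:ℝ) := by
      have := Ioo_mem_nhdsLT_of_mem (a := (0:ℝ)) (b := (1:ℝ)) (c := (1:ℝ))
        ⟨one_pos, le_refl 1⟩
      exact mem_of_superset this Ioo_subset_Ico_self
    filter_upwards [hmem] with t ht using hmvt t ht
  rw [hpd]
  linarith

include hE hcont hnonneg hzero hC1 hconst in
theorem D_eq_dist (hne : E.Nonempty) {x : Euc n} (hx : x ∈ Eᶜ) :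
    D x = ‖gradient D x‖ * infDist x E :=
  le_antisymm (upper_bound hE D hcont hzero hC1 hconst hne hx)
    (lower_bound hE D hcont hnonneg hC1 hconst hne hx)


/-- The Asplund function: `(‖y‖² - dist(y,E)²)/2`. -/
def phi (E : Set (Euc n)) : Euc n → ℝ := fun y => (‖y‖^2 - (infDist y E)^2)/2

theorem phi_continuous (E : Set (Euc n)) : Continuous (phi E) :=
  (((continuous_norm).pow 2).sub ((continuous_infDist_pt E).pow 2)).div_const 2

theorem phi_ge {e : Euc n} (he : e ∈ E) (y : Euc n) :
    ⟪y, e⟫ - ‖e‖^2/2 ≤ phi E y := by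
  have h1 : infDist y E ≤ ‖y - e‖ := by
    rw [← dist_eq_norm]; exact infDist_le_dist_of_mem he
  have h2 : (infDist y E)^2 ≤ ‖y - e‖^2 := pow_le_pow_left₀ infDist_nonneg h1 2
  have h3 := norm_sub_sq_real y e
  simp only [phi]
  nlinarith
  
theorem phi_eq_of_nearest {e y : Euc n} (hd : infDist y E = dist y e) :
    phi E y = ⟪y, e⟫ - ‖e‖^2/2 := by
  have h3 := norm_sub_sq_real y e
  rw [dist_eq_norm] at hd
  simp only [phi]
  rw [hd]
  linarith

theorem phi_subgradient {x e : Euc n} (he : e ∈ E) (hd : infDist x E = dist x e)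
    (y : Euc n) : phi E x + ⟪e, y - x⟫ ≤ phi E y := by
  have h1 := phi_ge he y
  have h2 := phi_eq_of_nearest (E := E) hd
  have h3 : ⟪e, y - x⟫ = ⟪e, y⟫ - ⟪e, x⟫ := inner_sub_right _ _ _
  have h4 : ⟪e, y⟫ = ⟪y, e⟫ := real_inner_comm _ _
  have h5 : ⟪e, x⟫ = ⟪x, e⟫ := real_inner_comm _ _
  linarith

include hE hcont hnonneg hzero hC1 hpos hconst in
theorem phi_hasFDerivAt (hne : E.Nonempty) {x e : Euc n} (he : e ∈ E)
    (hd : infDist x E = dist x e) : HasFDerivAt (phi E) (innerSL ℝ e) x := by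
  by_cases hx : x ∈ E
  · -- here the nearest point is x itself
    have hd0 : infDist x E = 0 := infDist_zero_of_mem hx
    have hex : e = x := by
      have : dist x e = 0 := by rw [← hd, hd0]
      rw [dist_comm] at this
      exact (dist_eq_zero.1 this)
    subst hex
    rw [hasFDerivAt_iff_isLittleO_nhds_zero]
    rw [Asymptotics.isLittleO_iff]
    intro c hc
    filter_upwards [ball_mem_nhds (0 : Euc n) (by positivity : (0:ℝ) < 2*c)] with v hv
    have hkey : phi E (e + v) - phi E e - (innerSL ℝ e) v = (‖v‖^2 - (infDist (e+v) E)^2)/2 := by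
      have h1 : phi E e = ‖e‖^2/2 := by simp [phi, hd0]
      have h2 : ‖e + v‖^2 = ‖e‖^2 + 2*⟪e,v⟫ + ‖v‖^2 := by
        have := norm_add_sq_real e v; linarith
      simp only [phi, innerSL_apply_apply, hd0]
      rw [h2]; ring
    have hband : |(‖v‖^2 - (infDist (e+v) E)^2)/2| ≤ ‖v‖^2/2 := by
      have hb1 : infDist (e+v) E ≤ ‖v‖ := by
        have := infDist_le_dist_of_mem (x := e + v) hx
        rw [dist_eq_norm] at this
        simpa using this
      have hb2 : (infDist (e+v) E)^2 ≤ ‖v‖^2 := pow_le_pow_left₀ infDist_nonneg hb1 2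
      have hb3 : (0:ℝ) ≤ (infDist (e+v) E)^2 := sq_nonneg _
      rw [abs_le]; constructor <;> nlinarith
    rw [Real.norm_eq_abs, hkey]
    have hv2 : ‖v‖ < 2*c := by simpa [dist_eq_norm] using hv
    calc |(‖v‖^2 - (infDist (e+v) E)^2)/2| ≤ ‖v‖^2/2 := hband
      _ ≤ c * ‖v‖ := by nlinarith [norm_nonneg v]
  · -- x in the complement: use the local formula via D
    have hxc : x ∈ Eᶜ := hx
    set c := ‖gradient D x‖ with hc
    have hc0 : 0 < c := hpos x hxc
    have hUopen : IsOpen (connectedComponentIn Eᶜ x) :=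
      (hE.isOpen_compl).connectedComponentIn
    have hxU : x ∈ connectedComponentIn Eᶜ x := mem_connectedComponentIn hxc
    have heq : phi E =ᶠ[𝓝 x] fun y => (‖y‖^2 - (D y / c)^2)/2 := by
      filter_upwards [hUopen.mem_nhds hxU] with y hyU
      have hyE : y ∈ Eᶜ := connectedComponentIn_subset Eᶜ x hyU
      have h1 := D_eq_dist hE D hcont hnonneg hzero hC1 hconst hne hyE
      rw [hconst x hxc y hyU, ← hc] at h1
      have h2 : infDist y E = D y / c := by
        rw [eq_div_iff (ne_of_gt hc0)]
        linarith [h1]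
      simp only [phi, h2]
    have hD : DifferentiableAt ℝ D x :=
      (hC1.contDiffAt ((hE.isOpen_compl).mem_nhds hxc)).differentiableAt one_ne_zero
    have h1 : DifferentiableAt ℝ (fun y : Euc n => ‖y‖^2) x :=
      differentiableAt_id.norm_sq ℝ
    have hg : DifferentiableAt ℝ (fun y => (‖y‖^2 - (D y / c)^2)/2) x := by
      simp only [div_eq_mul_inv, pow_two]
      apply DifferentiableAt.mul_const
      apply DifferentiableAt.sub
      · simpa [pow_two] using h1
      · exact (hD.mul_const _).mul (hD.mul_const _)
    have hdiffφ : DifferentiableAt ℝ (phi E) x := hg.congr_of_eventuallyEq heq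
    have hL := hdiffφ.hasFDerivAt
    have hsub : ∀ y, phi E x + ⟪e, y - x⟫ ≤ phi E y := phi_subgradient he hd
    rwa [fderiv_eq_innerSL_of_subgradient hL hsub] at hL


include hE hcont hnonneg hzero hC1 hpos hconst in
theorem E_convex : Convex ℝ E := by
  have hne : E.Nonempty := E_nonempty hE D hcont hnonneg hC1 hpos hconst
  intro a ha b hb s t hs ht hst
  choose P hPE hPd using fun y => hE.exists_infDist_eq_dist hne y
  set m := s • a + t • b with hm
  have hφd : ∀ y, HasFDerivAt (phi E) (innerSL ℝ (P y)) y := fun y =>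
    phi_hasFDerivAt hE D hcont hnonneg hzero hC1 hpos hconst hne (hPE y) (hPd y)
  set ψ : Euc n → ℝ := fun y => phi E y - ⟪m, y⟫ with hψ
  have hψcont : Continuous ψ :=
    (phi_continuous E).sub (continuous_const.inner continuous_id)
  set B : ℝ := -(s*‖a‖^2 + t*‖b‖^2)/2 with hB
  have hlower : ∀ y, B ≤ ψ y := by
    intro y
    have k1 := phi_ge ha y
    have k2 := phi_ge hb y
    have hmy : ⟪m, y⟫ = s*⟪y, a⟫ + t*⟪y, b⟫ := by
      rw [hm, inner_add_left, real_inner_smul_left, real_inner_smul_left,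
        real_inner_comm a y, real_inner_comm b y]
    have k1' : s * (⟪y, a⟫ - ‖a‖^2/2) ≤ s * phi E y := mul_le_mul_of_nonneg_left k1 hs
    have k2' : t * (⟪y, b⟫ - ‖b‖^2/2) ≤ t * phi E y := mul_le_mul_of_nonneg_left k2 ht
    have ksum : s * phi E y + t * phi E y = phi E y := by
      rw [← add_mul, hst, one_mul]
    simp only [hψ, hB]
    nlinarith [k1', k2', ksum, hmy]
  have hclaim : ∀ ε : ℝ, 0 < ε → infDist m E ≤ ε := by
    intro ε hε
    obtain ⟨y, _, _, h3⟩ := my_ekeland ψ hψcont B hlower 0 ε hε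
    have hinner : HasFDerivAt (fun z : Euc n => ⟪m, z⟫) (innerSL ℝ m) y :=
      (innerSL ℝ m).hasFDerivAt
    have hd : HasFDerivAt ψ (innerSL ℝ (P y) - innerSL ℝ m) y := (hφd y).sub hinner
    have hop : ‖innerSL ℝ (P y) - innerSL ℝ m‖ ≤ ε := opNorm_le_of_ekeland hε.le hd h3
    have hmap : innerSL ℝ (P y) - innerSL ℝ m = innerSL ℝ (P y - m) :=
      (map_sub (innerSL ℝ) _ _).symm
    rw [hmap, innerSL_apply_norm] at hop
    calc infDist m E ≤ dist m (P y) := infDist_le_dist_of_mem (hPE y)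
      _ = ‖P y - m‖ := by rw [dist_eq_norm, norm_sub_rev]
      _ ≤ ε := hop
  have h0 : infDist m E ≤ 0 := by
    by_contra hcon
    push_neg at hcon
    have := hclaim (infDist m E / 2) (by linarith)
    linarith
  have hmcl : m ∈ closure E :=
    (mem_closure_iff_infDist_zero hne).2 (le_antisymm h0 infDist_nonneg)
  rwa [hE.closure_eq] at hmcl

end Core

/-- if `D` is continuous, nonnegative, vanishes on the closed set `E`, is `C¹`
on `Ω = ℝⁿ ∖ E`, and `|∇D|` is positive and constant on each connected component of `Ω`,
then `E` is convex; and if moreover `|∇D| = 1` on all of `Ω`, then `D = dist(·, E)`. -/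
theorem convex_of_constant_gradient_norm (n : ℕ) (E : Set (Euc n)) (hE : IsClosed E)
    (D : Euc n → ℝ) (hcont : Continuous D) (hnonneg : ∀ x, 0 ≤ D x)
    (hzero : ∀ x ∈ E, D x = 0) (hC1 : ContDiffOn ℝ 1 D Eᶜ)
    (hpos : ∀ x ∈ Eᶜ, 0 < ‖gradient D x‖)
    (hconst : ∀ x ∈ Eᶜ, ∀ y ∈ connectedComponentIn Eᶜ x, ‖gradient D y‖ = ‖gradient D x‖) :
    Convex ℝ E ∧
      ((∀ x ∈ Eᶜ, ‖gradient D x‖ = 1) → ∀ x, D x = infDist x E) := by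
  have hne : E.Nonempty := E_nonempty hE D hcont hnonneg hC1 hpos hconst
  constructor
  · exact E_convex hE D hcont hnonneg hzero hC1 hpos hconst
  · intro hunit x
    by_cases hx : x ∈ E
    · rw [hzero x hx, infDist_zero_of_mem hx]
    · have h := D_eq_dist hE D hcont hnonneg hzero hC1 hconst hne hx
      rwa [hunit x hx, one_mul] at h

end
end

section
/- Let d < n be a positive integer, let P ⊂ ℝⁿ be an affine d-plane, and let E ⊂ P be a closed convex d-Ahlfors regular set. If the function x ↦ dist(x,E) is of class C² on ℝⁿ ∖ P, then E = P. -/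
open Metric MeasureTheory Set Filter
open scoped ENNReal Topology NNReal

noncomputable section

open Module
open scoped RealInnerProductSpace


lemma deriv_zero_of_right_const {g : ℝ → ℝ} (hg : DifferentiableAt ℝ g 0)
    (hc : ∀ s ∈ Set.Ioo (0:ℝ) 1, g s = g 0) : deriv g 0 = 0 := by
  have h1 : Tendsto (slope g 0) (𝓝[≠] (0:ℝ)) (𝓝 (deriv g 0)) :=
    hasDerivAt_iff_tendsto_slope.mp hg.hasDerivAt
  have h2 : Tendsto (slope g 0) (𝓝[>] (0:ℝ)) (𝓝 (deriv g 0)) :=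
    h1.mono_left (nhdsWithin_mono _ (fun x hx => ne_of_gt hx))
  have h3 : Tendsto (slope g 0) (𝓝[>] (0:ℝ)) (𝓝 0) := by
    have : slope g 0 =ᶠ[𝓝[>] (0:ℝ)] fun _ => (0:ℝ) := by
      filter_upwards [Ioo_mem_nhdsGT_of_mem (by norm_num : (0:ℝ) ∈ Set.Ico 0 1)] with t ht
      simp [slope_def_field, hc t ht]
    exact (tendsto_congr' this).mpr tendsto_const_nhds
  exact tendsto_nhds_unique h2 h3

lemma oneD_aux {h : ℝ → ℝ} (hh : ContDiff ℝ 2 h)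
    (hround : ∀ s ∈ Set.Icc (0:ℝ) 1, h s = 1) {c δ : ℝ} (hc : 0 < c) (hδ : 0 < δ)
    (hlow : ∀ s ∈ Set.Icc (-δ) 0, 1 + c * s ^ 2 ≤ h s) : False := by
  have hh' : ContDiff ℝ ((1:WithTop ℕ∞) + 1) h := by norm_num [hh]
  have hdiff : Differentiable ℝ h := (contDiff_succ_iff_deriv.mp hh').1
  have h1diff : Differentiable ℝ (deriv h) :=
    (contDiff_succ_iff_deriv.mp hh').2.2.differentiable one_ne_zero
  have h00 : h 0 = 1 := hround 0 (by norm_num)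
  -- deriv h vanishes on Ioo 0 1
  have hd : ∀ s ∈ Set.Ioo (0:ℝ) 1, deriv h s = 0 := by
    intro s hs
    have he : h =ᶠ[𝓝 s] fun _ => (1:ℝ) := by
      filter_upwards [Ioo_mem_nhds hs.1 hs.2] with t ht
      exact hround t (Set.Ioo_subset_Icc_self ht)
    rw [he.deriv_eq, deriv_const]
  have hd0 : deriv h 0 = 0 := by
    apply deriv_zero_of_right_const (hdiff 0)
    intro s hs; rw [hround s (Set.Ioo_subset_Icc_self hs), h00]
  have hdd0 : deriv (deriv h) 0 = 0 := by
    apply deriv_zero_of_right_const (h1diff 0)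
    intro s hs; rw [hd s hs, hd0]
  -- deriv h is o(s) near 0
  have hder : HasDerivAt (deriv h) 0 0 := by
    have := (h1diff 0).hasDerivAt; rwa [hdd0] at this
  have hlo := hasDerivAt_iff_isLittleO.mp hder
  simp only [sub_zero, smul_zero, hd0, sub_zero] at hlo
  have hev : ∀ᶠ s in 𝓝 (0:ℝ), |deriv h s| ≤ (c/2) * |s| := by
    have := hlo.bound (by positivity : (0:ℝ) < c/2)
    filter_upwards [this] with s hs
    simpa [Real.norm_eq_abs] using hs
  obtain ⟨δ', hδ', hball⟩ := Metric.eventually_nhds_iff.mp hev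
  set s₀ : ℝ := -(min δ δ' / 2) with hs₀def
  have hmin : 0 < min δ δ' := lt_min hδ hδ'
  have hs₀neg : s₀ < 0 := by rw [hs₀def]; linarith
  -- MVT on [s₀, 0]
  obtain ⟨ξ, hξ, hslope⟩ := exists_hasDerivAt_eq_slope h (deriv h) hs₀neg
    (hdiff.continuous.continuousOn) (fun x _ => (hdiff x).hasDerivAt)
  have hξabs : |ξ| ≤ |s₀| := by
    rw [abs_of_neg hξ.2, abs_of_neg hs₀neg]; linarith [hξ.1]
  have hξball : dist ξ 0 < δ' := by
    rw [Real.dist_eq, sub_zero]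
    calc |ξ| ≤ |s₀| := hξabs
    _ = min δ δ' / 2 := by rw [hs₀def, abs_neg, abs_of_pos (by positivity)]
    _ < δ' := by have := min_le_right δ δ'; linarith
  have hbd := hball hξball
  -- h 0 - h s₀ = deriv h ξ * (0 - s₀)
  have heq : h 0 - h s₀ = deriv h ξ * (0 - s₀) :=
    ((eq_div_iff (by linarith : (0:ℝ) - s₀ ≠ 0)).mp hslope).symm
  have hlow₀ : 1 + c * s₀ ^ 2 ≤ h s₀ := by
    apply hlow
    constructor
    · rw [hs₀def]; have := min_le_left δ δ'; linarith
    · linarith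
  have : c * s₀ ^ 2 ≤ h s₀ - 1 := by linarith
  have h2 : h s₀ - 1 = deriv h ξ * s₀ := by rw [h00] at heq; linarith
  have h3 : c * s₀ ^ 2 ≤ |deriv h ξ| * |s₀| := by
    rw [h2] at this; calc c * s₀^2 ≤ deriv h ξ * s₀ := this
    _ ≤ |deriv h ξ * s₀| := le_abs_self _
    _ = |deriv h ξ| * |s₀| := abs_mul _ _
  have h4 : |deriv h ξ| * |s₀| ≤ (c/2) * |s₀| * |s₀| := by
    apply mul_le_mul_of_nonneg_right _ (abs_nonneg _)
    calc |deriv h ξ| ≤ c/2 * |ξ| := hbd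
    _ ≤ c/2 * |s₀| := by nlinarith [abs_nonneg ξ]
  have hs₀sq : |s₀| * |s₀| = s₀ ^ 2 := by rw [← pow_two, sq_abs]
  nlinarith [sq_nonneg s₀, abs_nonneg s₀, mul_pos hc (mul_pos (neg_pos.mpr hs₀neg) (neg_pos.mpr hs₀neg))]

lemma le_infDist' {X : Type*} [MetricSpace X] {s : Set X} (hs : s.Nonempty) {x : X} {b : ℝ}
    (h : ∀ y ∈ s, b ≤ dist x y) : b ≤ infDist x s := by
  haveI := hs.to_subtype
  rw [infDist_eq_iInf]
  exact le_ciInf (fun y => h y y.2)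

lemma quad_bound {c s W T : ℝ} (hc : 0 < c) (hsneg : s ≤ 0) (h1c : -(1/c) ≤ s)
    (hW : 0 ≤ W) (hT : 0 ≤ T) (hwle : (-s) * c ≤ W) (h2 : T ^ 2 = W ^ 2 + 1) :
    1 + c ^ 2 / 3 * s ^ 2 ≤ T := by
  have h0 : 0 ≤ (-s) * c := mul_nonneg (neg_nonneg.2 hsneg) hc.le
  have hwsq : c ^ 2 * s ^ 2 ≤ W ^ 2 := by nlinarith
  have hcs : c ^ 2 * s ^ 2 ≤ 1 := by
    have habs : s ^ 2 ≤ (1/c) ^ 2 := by nlinarith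
    have h5 : c ^ 2 * s ^ 2 ≤ c ^ 2 * (1/c) ^ 2 :=
      mul_le_mul_of_nonneg_left habs (sq_nonneg c)
    have h6 : c ^ 2 * (1/c) ^ 2 = 1 := by field_simp
    linarith
  nlinarith [sq_nonneg (T - (1 + c^2/3 * s^2)), sq_nonneg (c^2 * s^2), sq_nonneg (c*s)]




lemma span_eq_plane (n d : ℕ) (P : AffineSubspace ℝ (Euc n))
    (hP : Module.finrank ℝ P.direction = d) (E : Set (Euc n)) (hEP : E ⊆ (P : Set (Euc n)))
    {z : Euc n} (hz : z ∈ E) (hpos : Measure.hausdorffMeasure (d : ℝ) E ≠ 0) :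
    affineSpan ℝ E = P := by
  set S := affineSpan ℝ E with hS
  have hle : S ≤ P := affineSpan_le.mpr hEP
  have hz' : z ∈ S := subset_affineSpan ℝ E hz
  have hdirle : S.direction ≤ P.direction := AffineSubspace.direction_le hle
  rw [AffineSubspace.eq_iff_direction_eq_of_mem hz' (hle hz')]
  by_contra hne
  have hlt : Module.finrank ℝ S.direction < d := by
    rcases lt_or_eq_of_le (Submodule.finrank_mono hdirle) with h | h
    · rwa [hP] at h
    · exact absurd (Submodule.eq_of_le_of_finrank_eq hdirle (by rw [h, hP])) hne
  -- S as a set is an isometric image of S.direction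
  have hiso : Isometry (fun w : S.direction => (w : Euc n) + z) := by
    apply Isometry.of_dist_eq
    intro w₁ w₂
    simp [dist_eq_norm]
  have hrange : (fun w : S.direction => (w : Euc n) + z) '' univ = (S : Set (Euc n)) := by
    ext x
    simp only [image_univ, mem_range, SetLike.mem_coe]
    constructor
    · rintro ⟨w, rfl⟩
      have := AffineSubspace.vadd_mem_of_mem_direction w.2 hz'
      simpa [vadd_eq_add] using this
    · intro hx
      refine ⟨⟨x - z, ?_⟩, by simp⟩
      have := AffineSubspace.vsub_mem_direction hx hz'
      simpa [vsub_eq_sub] using this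
  have hdimS : dimH (S : Set (Euc n)) = Module.finrank ℝ S.direction := by
    rw [← hrange, hiso.dimH_image, Real.dimH_univ_eq_finrank]
  have hzero : Measure.hausdorffMeasure (d : ℝ) (S : Set (Euc n)) = 0 := by
    have h1 : dimH (S : Set (Euc n)) < ((d : ℝ≥0) : ℝ≥0∞) := by
      rw [hdimS]
      exact_mod_cast Nat.cast_lt.mpr hlt
    have := hausdorffMeasure_of_dimH_lt h1
    simpa using this
  exact hpos (le_antisymm (hzero ▸ measure_mono (subset_affineSpan ℝ E)) zero_le)

lemma exists_eps_mem {m : ℕ} (E : Set (Euc m)) {z : Euc m} (hz : z ∈ intrinsicInterior ℝ E)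
    {u : Euc m} (hu : u ∈ (affineSpan ℝ E).direction) : ∃ ε : ℝ, 0 < ε ∧ z + ε • u ∈ E := by
  rw [mem_intrinsicInterior] at hz
  obtain ⟨y, hy, hyz⟩ := hz
  have hzspan : z ∈ affineSpan ℝ E := hyz ▸ y.2
  have hmem : ∀ t : ℝ, z + t • u ∈ affineSpan ℝ E := fun t => by
    have := AffineSubspace.vadd_mem_of_mem_direction
      (Submodule.smul_mem _ t hu) hzspan
    simpa [vadd_eq_add, add_comm] using this
  set c : ℝ → affineSpan ℝ E := fun t => ⟨z + t • u, hmem t⟩ with hc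
  have hcont : Continuous c := by
    apply Continuous.subtype_mk
    exact continuous_const.add (continuous_id.smul continuous_const)
  have hc0 : c 0 = y := by
    apply Subtype.ext
    simp [hc, hyz]
  have hnhds : c ⁻¹' interior (Subtype.val ⁻¹' E) ∈ 𝓝 (0 : ℝ) := by
    apply (isOpen_interior.preimage hcont).mem_nhds
    simp only [mem_preimage, hc0]
    exact hy
  obtain ⟨r, hr, hball⟩ := Metric.mem_nhds_iff.mp hnhds
  refine ⟨r / 2, by positivity, ?_⟩
  have : c (r / 2) ∈ interior (Subtype.val ⁻¹' E) :=
    hball (by simp [Real.dist_eq, abs_of_pos]; rw [abs_of_pos (by positivity)]; linarith)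
  have := interior_subset this
  simpa [hc] using this

/-- if `E` is a closed convex `d`-Ahlfors regular subset of an affine `d`-plane
`P ⊂ ℝⁿ` and `x ↦ dist(x, E)` is `C²` on `ℝⁿ ∖ P`, then `E = P`. -/
theorem eq_plane_of_distance_C2 (n d : ℕ) (hn : 2 ≤ n) (hd : 0 < d) (hdn : d < n)
    (P : AffineSubspace ℝ (Euc n)) (hP : Module.finrank ℝ P.direction = d)
    (E : Set (Euc n)) (hEP : E ⊆ (P : Set (Euc n)))
    (hclosed : IsClosed E) (hconv : Convex ℝ E)
    (C₀ : ℝ) (hC₀ : 1 ≤ C₀) (hunb : ¬Bornology.IsBounded E)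
    (hAR : ∀ Q ∈ E, ∀ r > 0,
      ENNReal.ofReal (C₀⁻¹ * r ^ (d : ℝ)) ≤ Measure.hausdorffMeasure (d : ℝ) (E ∩ ball Q r) ∧
      Measure.hausdorffMeasure (d : ℝ) (E ∩ ball Q r) ≤ ENNReal.ofReal (C₀ * r ^ (d : ℝ)))
    (hC2 : ContDiffOn ℝ 2 (fun x => infDist x E) ((P : Set (Euc n))ᶜ)) :
    E = (P : Set (Euc n)) := by
  -- E is nonempty
  have hEne : E.Nonempty := by
    rcases E.eq_empty_or_nonempty with h | h
    · exact absurd (h ▸ Bornology.isBounded_empty) hunb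
    · exact h
  obtain ⟨z₀, hz₀⟩ := hEne
  have hEne : E.Nonempty := ⟨z₀, hz₀⟩
  -- E has positive d-Hausdorff measure
  have hpos : Measure.hausdorffMeasure (d : ℝ) E ≠ 0 := by
    intro h0
    have hlow := (hAR z₀ hz₀ 1 one_pos).1
    have : Measure.hausdorffMeasure (d : ℝ) (E ∩ ball z₀ 1) = 0 :=
      le_antisymm (h0 ▸ measure_mono inter_subset_left) zero_le
    rw [this, nonpos_iff_eq_zero, ENNReal.ofReal_eq_zero] at hlow
    have : (0:ℝ) < C₀⁻¹ * 1 ^ (d:ℝ) := by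
      rw [Real.one_rpow, mul_one]
      exact inv_pos.mpr (lt_of_lt_of_le one_pos hC₀)
    linarith
  have hspan : affineSpan ℝ E = P := span_eq_plane n d P hP E hEP hz₀ hpos
  by_contra hne
  obtain ⟨q, hqP, hqE⟩ : ∃ q ∈ (P : Set (Euc n)), q ∉ E :=
    not_subset.mp (fun hsub => hne (le_antisymm hEP hsub))
  -- interior point z
  obtain ⟨z, hzint⟩ := hEne.intrinsicInterior hconv
  have hzE : z ∈ E := intrinsicInterior_subset hzint
  -- nearest point p to q
  obtain ⟨p, hpE, hproj⟩ :=
    exists_norm_eq_iInf_of_complete_convex hEne hclosed.isComplete hconv q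
  have hsupport : ∀ y ∈ E, ⟪q - p, y - p⟫ ≤ 0 :=
    (norm_eq_iInf_iff_real_inner_le_zero hconv hpE).mp hproj
  set u : Euc n := q - p with hu_def
  have hpP : p ∈ P := hEP hpE
  have huP : u ∈ P.direction := by
    have := AffineSubspace.vsub_mem_direction hqP hpP
    simpa [hu_def, vsub_eq_sub] using this
  have hune : u ≠ 0 := sub_ne_zero.mpr (fun h => hqE (h ▸ hpE))
  -- strict support at z
  obtain ⟨ε, hε, hzu⟩ := exists_eps_mem E hzint (by rw [hspan]; exact huP)
  have hstrict : ⟪u, z - p⟫ ≤ -(ε * ‖u‖ ^ 2) := by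
    have h1 := hsupport (z + ε • u) hzu
    have h2 : ⟪u, z + ε • u - p⟫ = ⟪u, z - p⟫ + ε * ‖u‖ ^ 2 := by
      rw [show z + ε • u - p = (z - p) + ε • u from add_sub_right_comm z (ε • u) p,
        inner_add_right, real_inner_smul_right, real_inner_self_eq_norm_sq]
    rw [h2] at h1
    linarith
  set v : Euc n := z - p with hv_def
  have hvP : v ∈ P.direction := by
    have := AffineSubspace.vsub_mem_direction (hEP hzE) hpP
    simpa [hv_def, vsub_eq_sub] using this
  set a : ℝ := -⟪u, v⟫ with ha_def
  have ha : 0 < a := by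
    have : 0 < ε * ‖u‖ ^ 2 := mul_pos hε (pow_pos (norm_pos_iff.mpr hune) 2)
    rw [ha_def]; rw [hv_def]; linarith [hstrict]
  set c : ℝ := a / ‖u‖ with hc_def
  have hc : 0 < c := div_pos ha (norm_pos_iff.mpr hune)
  have hunorm : 0 < ‖u‖ := norm_pos_iff.mpr hune
  -- unit normal vector ν to P
  have hbot : P.directionᗮ ≠ ⊥ := by
    intro hbot
    have h1 := Submodule.finrank_add_finrank_orthogonal (𝕜 := ℝ) P.direction
    rw [hbot, hP, finrank_bot] at h1
    simp only [finrank_euclideanSpace, Fintype.card_fin, add_zero] at h1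
    omega
  obtain ⟨ν₀, hν₀P, hν₀ne⟩ := Submodule.exists_mem_ne_zero_of_ne_bot hbot
  set ν : Euc n := ‖ν₀‖⁻¹ • ν₀ with hν_def
  have hνP : ν ∈ P.directionᗮ := Submodule.smul_mem _ _ hν₀P
  have hνnorm : ‖ν‖ = 1 := norm_smul_inv_norm hν₀ne
  have hνinner : ∀ w ∈ P.direction, ⟪w, ν⟫ = 0 :=
    (Submodule.mem_orthogonal _ ν).mp hνP
  set x : Euc n := p + ν with hx_def
  -- points on the x + s • v line of P-members
  have hpsv : ∀ s : ℝ, p + s • v ∈ P := fun s => by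
    have := AffineSubspace.vadd_mem_of_mem_direction (Submodule.smul_mem _ s hvP) hpP
    simpa [vadd_eq_add, add_comm] using this
  -- K1 : the line avoids P
  have hline : ∀ s : ℝ, x + s • v ∉ (P : Set (Euc n)) := by
    intro s hmem
    have h2 : ν ∈ P.direction := by
      have h3 := AffineSubspace.vsub_mem_direction hmem (hpsv s)
      have heq : (x + s • v) -ᵥ (p + s • v) = ν := by
        rw [vsub_eq_sub, hx_def]; abel
      rwa [heq] at h3
    have := hνinner ν h2
    rw [real_inner_self_eq_norm_sq, hνnorm] at this
    norm_num at this
  -- K2 : distance decomposition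
  have hdecomp : ∀ s : ℝ, ∀ y ∈ E, ‖x + s • v - y‖ ^ 2 = ‖p + s • v - y‖ ^ 2 + 1 := by
    intro s y hy
    have hw : p + s • v - y ∈ P.direction := by
      have := AffineSubspace.vsub_mem_direction (hpsv s) (hEP hy)
      simpa [vsub_eq_sub] using this
    have heq : x + s • v - y = (p + s • v - y) + ν := by rw [hx_def]; abel
    rw [heq, norm_add_sq_real, hνinner _ hw, hνnorm]
    ring
  -- K3 : h = 1 on [0, 1]
  have hround : ∀ s ∈ Set.Icc (0:ℝ) 1, infDist (x + s • v) E = 1 := by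
    intro s hs
    have hy₀ : p + s • v ∈ E := by
      have hcomb : (1 - s) • p + s • z ∈ E :=
        hconv hpE hzE (by linarith [hs.2]) hs.1 (by ring)
      have : p + s • v = (1 - s) • p + s • z := by rw [hv_def]; module
      rwa [this]
    apply le_antisymm
    · have := infDist_le_dist_of_mem hy₀ (x := x + s • v)
      have heq : dist (x + s • v) (p + s • v) = 1 := by
        rw [dist_eq_norm, show x + s • v - (p + s • v) = ν by rw [hx_def]; abel, hνnorm]
      rwa [heq] at this
    · apply le_infDist' hEne
      intro y hy
      rw [dist_eq_norm]
      have h2 := hdecomp s y hy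
      nlinarith [norm_nonneg (x + s • v - y), sq_nonneg (‖p + s • v - y‖)]
  -- K4 : quadratic lower bound for s ≤ 0
  have hlow : ∀ s ∈ Set.Icc (-(1/c)) 0, 1 + (c ^ 2 / 3) * s ^ 2 ≤ infDist (x + s • v) E := by
    intro s hs
    apply le_infDist' hEne
    intro y hy
    rw [dist_eq_norm]
    have h2 := hdecomp s y hy
    have hinner : (-s) * a ≤ ⟪p + s • v - y, u⟫ := by
      have e1 : ⟪p + s • v - y, u⟫ = ⟪p - y, u⟫ + s * ⟪v, u⟫ := by
        rw [show p + s • v - y = (p - y) + s • v by abel, inner_add_left, real_inner_smul_left]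
      have e2 : 0 ≤ ⟪p - y, u⟫ := by
        have := hsupport y hy
        rw [real_inner_comm] at this
        rw [show p - y = -(y - p) by abel, inner_neg_left]
        linarith
      have e3 : s * ⟪v, u⟫ = (-s) * a := by
        rw [ha_def, real_inner_comm]; ring
      rw [e1, e3]; linarith
    have hwle : (-s) * c ≤ ‖p + s • v - y‖ := by
      have h3 := real_inner_le_norm (p + s • v - y) u
      rw [hc_def, ← mul_div_assoc, div_le_iff₀ hunorm]
      exact hinner.trans h3
    exact quad_bound hc hs.2 hs.1 (norm_nonneg _) (norm_nonneg _) hwle h2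
  -- K5 : regularity along the line
  have hC2line : ContDiff ℝ 2 (fun s : ℝ => infDist (x + s • v) E) := by
    rw [← contDiffOn_univ]
    exact hC2.comp ((contDiff_const.add (contDiff_id.smul contDiff_const)).contDiffOn)
      (fun s _ => hline s)
  exact oneD_aux hC2line hround (by positivity : (0:ℝ) < c ^ 2 / 3) (by positivity) hlow
end
end
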